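/- arXiv:math/0310312 — 8 statements merged into one kernel-verified Lean document; each statement's English description precedes it below -/
import Mathlib

section
/- Let U, V, W be Banach spaces over 𝕜 = ℝ or ℂ and let ι : U → V and π : V → W be continuous linear maps such that ι is injective, range ι = ker π, and π is surjective (i.e. 0 → U → V → W → 0 is an exact sequence of Banach spaces). Then the dual sequence 0 → W* → V* → U* → 0 is exact; that is, the dual map π* : W* → V* is injective, range π* = ker ι*, and the dual map ι* : V* → U* is surjective. -/
open NormedSpace

variable {𝕜 : Type*} [RCLike 𝕜]

/-- The dual map `f* : F* → E*`, `f*(μ) = μ ∘ f`, of a continuous linear map `f : E → F`. -/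
noncomputable def dualMap {E F : Type*} [NormedAddCommGroup E] [NormedSpace 𝕜 E]
    [NormedAddCommGroup F] [NormedSpace 𝕜 F] (f : E →L[𝕜] F) :
    StrongDual 𝕜 F →L[𝕜] StrongDual 𝕜 E :=
  (ContinuousLinearMap.compL 𝕜 E F 𝕜).flip f

theorem dualMap_apply {E F : Type*} [NormedAddCommGroup E] [NormedSpace 𝕜 E]
    [NormedAddCommGroup F] [NormedSpace 𝕜 F] (f : E →L[𝕜] F) (μ : StrongDual 𝕜 F) (x : E) :
    dualMap f μ x = μ (f x) := rfl

/-- If `0 → U → V → W → 0` is an exact sequence of Banach spaces, then the dual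
sequence `0 → W* → V* → U* → 0` is exact. -/
theorem dual_sequence_exact {U V W : Type*}
    [NormedAddCommGroup U] [NormedSpace 𝕜 U] [CompleteSpace U]
    [NormedAddCommGroup V] [NormedSpace 𝕜 V] [CompleteSpace V]
    [NormedAddCommGroup W] [NormedSpace 𝕜 W] [CompleteSpace W]
    (ι : U →L[𝕜] V) (π : V →L[𝕜] W)
    (hι : Function.Injective ι)
    (hexact : Set.range ι = {v : V | π v = 0})
    (hπ : Function.Surjective π) :
    Function.Injective (dualMap π) ∧
      Set.range (dualMap π) = {μ : StrongDual 𝕜 V | dualMap ι μ = 0} ∧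
      Function.Surjective (dualMap ι) := by
  have hπι : ∀ u : U, π (ι u) = 0 := fun u => by
    have : ι u ∈ Set.range ι := Set.mem_range_self u
    rwa [hexact] at this
  refine ⟨?_, ?_, ?_⟩
  · -- injectivity of π*
    intro μ₁ μ₂ h
    ext w
    obtain ⟨v, rfl⟩ := hπ w
    exact DFunLike.congr_fun h v
  · -- range π* = ker ι*
    ext μ
    constructor
    · rintro ⟨ν, rfl⟩
      show dualMap ι (dualMap π ν) = 0
      ext u
      simp [dualMap_apply, hπι u]
    · intro hμ
      have hμι : ∀ u : U, μ (ι u) = 0 := fun u => by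
        have := DFunLike.congr_fun (Set.mem_setOf_eq ▸ hμ) u
        simpa [dualMap_apply] using this
      have hker : LinearMap.ker (π : V →ₗ[𝕜] W) ≤ LinearMap.ker (μ : V →ₗ[𝕜] 𝕜) := by
        intro v hv
        rw [LinearMap.mem_ker] at hv ⊢
        have : v ∈ Set.range ι := by rw [hexact]; exact hv
        obtain ⟨u, rfl⟩ := this
        exact hμι u
      set e := LinearMap.quotKerEquivOfSurjective (π : V →ₗ[𝕜] W) hπ with he_def
      set νₗ : W →ₗ[𝕜] 𝕜 :=
        ((LinearMap.ker (π : V →ₗ[𝕜] W)).liftQ (μ : V →ₗ[𝕜] 𝕜) hker).comp e.symm.toLinearMap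
        with hν_def
      have he : ∀ v : V, e (Submodule.Quotient.mk v) = π v := fun v => rfl
      have hkey : ∀ v : V, νₗ (π v) = μ v := fun v => by
        have : e.symm (π v) = Submodule.Quotient.mk v := by
          apply e.injective; rw [e.apply_symm_apply, he]
        simp [hν_def, this]
      have hq := π.isQuotientMap hπ
      have hcont : Continuous νₗ := by
        rw [hq.continuous_iff]
        have : (νₗ : W → 𝕜) ∘ π = μ := funext hkey
        rw [this]
        exact μ.continuous
      refine ⟨⟨νₗ, hcont⟩, ?_⟩
      ext v
      exact hkey v
  · -- surjectivity of ι*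
    intro φ
    have hclosed : IsClosed (LinearMap.range (ι : U →ₗ[𝕜] V) : Set V) := by
      have : (LinearMap.range (ι : U →ₗ[𝕜] V) : Set V) = {v : V | π v = 0} := by
        rw [← hexact]; ext v; simp [LinearMap.mem_range]
      rw [this]
      exact ContinuousLinearMap.isClosed_ker π
    haveI : CompleteSpace (LinearMap.range (ι : U →ₗ[𝕜] V)) := hclosed.completeSpace_coe
    set ι' : U →L[𝕜] LinearMap.range (ι : U →ₗ[𝕜] V) :=
      ι.codRestrict (LinearMap.range (ι : U →ₗ[𝕜] V)) (fun u => LinearMap.mem_range_self _ u) with hι'_def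
    have hinj : LinearMap.ker ι'.toLinearMap = ⊥ := by
      rw [LinearMap.ker_eq_bot]
      intro a b hab
      apply hι
      exact congrArg Subtype.val hab
    have hsurj : LinearMap.range ι'.toLinearMap = ⊤ := by
      rw [LinearMap.range_eq_top]
      rintro ⟨v, u, rfl⟩
      exact ⟨u, rfl⟩
    set e3 := ContinuousLinearEquiv.ofBijective ι' hinj hsurj with he3_def
    obtain ⟨g, hg, -⟩ :=
      exists_extension_norm_eq (LinearMap.range (ι : U →ₗ[𝕜] V)) (φ.comp (e3.symm : _ →L[𝕜] U))
    refine ⟨g, ?_⟩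
    ext u
    have h1 : g (ι u) = φ (e3.symm (ι' u)) := hg (ι' u)
    have h2 : e3.symm (ι' u) = u := by
      have : e3 u = ι' u := rfl
      rw [← this, e3.symm_apply_apply]
    rw [dualMap_apply, h1, h2]
end

section
/- Let U₀, V₀, W₀ be Banach spaces over 𝕜 = ℝ or ℂ and set U := (U₀)*, V := (V₀)*, W := (W₀)*, so that U₀, V₀, W₀ are preduals of U, V, W; regard U₀ ⊆ U*, V₀ ⊆ V*, W₀ ⊆ W* via the canonical embeddings into the double duals. Suppose ι : U → V and π : V → W are continuous linear maps with ι injective, range ι = ker π, and π surjective, and suppose the dual maps preserve the preduals: π*(W₀) ⊆ V₀ and ι*(V₀) ⊆ U₀. Let π₀ : W₀ → V₀ and ι₀ : V₀ → U₀ denote the restrictions of π* and ι*. Then the sequence 0 → W₀ → V₀ → U₀ → 0 is exact: π₀ is injective, range π₀ = ker ι₀, and ι₀ is surjective. -/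
open NormedSpace

variable {𝕜 : Type*} [RCLike 𝕜]

/-- Auxiliary Hahn–Banach lemma: given a submodule `S` of a normed space `E` and a point `x`,
there is a functional of norm at most one vanishing on `S` whose value at `x` is the norm of
the class of `x` in the quotient `E ⧸ S`. -/
theorem aux_exists_dual_annihilator {E : Type*} [NormedAddCommGroup E] [NormedSpace 𝕜 E]
    (S : Submodule 𝕜 E) (hS : IsClosed (S : Set E)) (x : E) :
    ∃ f : StrongDual 𝕜 E, ‖f‖ ≤ 1 ∧ (∀ s ∈ S, f s = 0) ∧
      f x = ((‖(Submodule.Quotient.mk x : E ⧸ S)‖ : ℝ) : 𝕜) := by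
  haveI : IsClosed (S : Set E) := hS
  let mkC : E →L[𝕜] E ⧸ S :=
    S.mkQ.mkContinuous 1 (fun y => by
      simpa using Submodule.Quotient.norm_mk_le (S := S) y)
  obtain ⟨g, hg1, hg2⟩ := exists_dual_vector'' 𝕜 (Submodule.Quotient.mk x : E ⧸ S)
  refine ⟨g.comp mkC, ?_, ?_, ?_⟩
  · calc ‖g.comp mkC‖ ≤ ‖g‖ * ‖mkC‖ := g.opNorm_comp_le mkC
      _ ≤ 1 * 1 := by
          have h2 : ‖mkC‖ ≤ 1 := LinearMap.mkContinuous_norm_le _ zero_le_one _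
          exact mul_le_mul hg1 h2 (ContinuousLinearMap.opNorm_nonneg mkC) zero_le_one
      _ = 1 := one_mul 1
  · intro s hs
    have hmk : mkC s = 0 := by
      show (Submodule.Quotient.mk s : E ⧸ S) = 0
      exact (Submodule.Quotient.mk_eq_zero S).mpr hs
    show g (mkC s) = 0
    rw [hmk, map_zero]
  · show g (mkC x) = _
    exact hg2

set_option maxHeartbeats 1000000 in
set_option synthInstance.maxHeartbeats 400000 in
/-- If `0 → U → V → W → 0` is an exact sequence of dual Banach spaces
(`U = (U₀)*`, `V = (V₀)*`, `W = (W₀)*`) whose dual maps preserve the preduals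
(`π*(W₀) ⊆ V₀`, `ι*(V₀) ⊆ U₀`, where the preduals are regarded as subspaces of the duals
via the canonical embeddings into the double duals), then the restricted predual sequence
`0 → W₀ → V₀ → U₀ → 0` is exact. -/
theorem predual_sequence_exact {U₀ V₀ W₀ : Type*}
    [NormedAddCommGroup U₀] [NormedSpace 𝕜 U₀] [CompleteSpace U₀]
    [NormedAddCommGroup V₀] [NormedSpace 𝕜 V₀] [CompleteSpace V₀]
    [NormedAddCommGroup W₀] [NormedSpace 𝕜 W₀] [CompleteSpace W₀]
    (ι : StrongDual 𝕜 U₀ →L[𝕜] StrongDual 𝕜 V₀) (π : StrongDual 𝕜 V₀ →L[𝕜] StrongDual 𝕜 W₀)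
    (hι : Function.Injective ι)
    (hexact : Set.range ι = {v : StrongDual 𝕜 V₀ | π v = 0})
    (hπ : Function.Surjective π)
    -- `π₀ : W₀ → V₀` is the restriction of `π*` to the preduals:
    (π₀ : W₀ →L[𝕜] V₀)
    (hπ₀ : ∀ w : W₀,
      inclusionInDoubleDual 𝕜 V₀ (π₀ w) = dualMap π (inclusionInDoubleDual 𝕜 W₀ w))
    -- `ι₀ : V₀ → U₀` is the restriction of `ι*` to the preduals:
    (ι₀ : V₀ →L[𝕜] U₀)
    (hι₀ : ∀ v : V₀,
      inclusionInDoubleDual 𝕜 U₀ (ι₀ v) = dualMap ι (inclusionInDoubleDual 𝕜 V₀ v)) :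
    Function.Injective π₀ ∧
      Set.range π₀ = {v : V₀ | ι₀ v = 0} ∧
      Function.Surjective ι₀ := by
  classical
  -- pointwise identities
  have hπ' : ∀ (v : StrongDual 𝕜 V₀) (w : W₀), π v w = v (π₀ w) := by
    intro v w
    have h := congrArg (fun F : StrongDual 𝕜 (StrongDual 𝕜 V₀) => F v) (hπ₀ w)
    simpa [dualMap, NormedSpace.dual_def] using h.symm
  have hι' : ∀ (u : StrongDual 𝕜 U₀) (v : V₀), ι u v = u (ι₀ v) := by
    intro u v
    have h := congrArg (fun F : StrongDual 𝕜 (StrongDual 𝕜 U₀) => F u) (hι₀ v)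
    simpa [dualMap, NormedSpace.dual_def] using h.symm
  -- `range ι` is closed
  have hclosed_rangeι : IsClosed (Set.range ι) := by
    rw [hexact]
    exact isClosed_singleton.preimage π.continuous
  -- `ι` is bounded below, with constant `c`
  set K : Submodule 𝕜 (StrongDual 𝕜 V₀) :=
    LinearMap.range (ι : StrongDual 𝕜 U₀ →ₗ[𝕜] StrongDual 𝕜 V₀) with hK
  have hKc : IsClosed (K : Set (StrongDual 𝕜 V₀)) := by
    simpa [hK, LinearMap.coe_range] using hclosed_rangeι
  haveI : CompleteSpace K := hKc.completeSpace_coe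
  set ι' : StrongDual 𝕜 U₀ →L[𝕜] K :=
    ι.codRestrict K (fun u => LinearMap.mem_range_self _ u) with hι'def
  have hinj : LinearMap.ker (ι' : StrongDual 𝕜 U₀ →ₗ[𝕜] K) = ⊥ := by
    rw [ContinuousLinearMap.ker_codRestrict]
    exact LinearMap.ker_eq_bot_of_injective hι
  have hsurj : LinearMap.range (ι' : StrongDual 𝕜 U₀ →ₗ[𝕜] K) = ⊤ := by
    rw [Submodule.eq_top_iff']
    rintro ⟨v, hv⟩
    obtain ⟨u, hu⟩ := hv
    exact ⟨u, Subtype.ext hu⟩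
  set e := ContinuousLinearEquiv.ofBijective (𝕜 := 𝕜) (𝕜' := 𝕜) (σ := RingHom.id 𝕜)
    (σ' := RingHom.id 𝕜) (E := StrongDual 𝕜 U₀) (F := K) (by exact ι') (by exact hinj)
    (by exact hsurj) with he
  set c := ‖(e.symm : K →L[𝕜] StrongDual 𝕜 U₀)‖ with hcdef
  have hc0 : 0 ≤ c := norm_nonneg _
  have hc : ∀ u : StrongDual 𝕜 U₀, ‖u‖ ≤ c * ‖ι u‖ := by
    intro u
    have h1 : e.symm (e u) = u := e.symm_apply_apply u
    have h2 := (e.symm : K →L[𝕜] StrongDual 𝕜 U₀).le_opNorm (e u)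
    rw [show ((e.symm : K →L[𝕜] StrongDual 𝕜 U₀) (e u)) = e.symm (e u) from rfl, h1] at h2
    have h3 : ‖e u‖ = ‖ι u‖ := rfl
    rwa [h3] at h2
  -- open mapping constant for `π`
  obtain ⟨C, Cpos, hC⟩ := ContinuousLinearMap.exists_preimage_norm_le π hπ
  -- `π₀` is injective
  have hπ₀inj : Function.Injective π₀ := by
    rw [injective_iff_map_eq_zero]
    intro w hw
    refine NormedSpace.eq_zero_of_forall_dual_eq_zero 𝕜 (fun g => ?_)
    obtain ⟨v, rfl⟩ := hπ g
    rw [hπ' v w, hw, map_zero]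
  -- `π₀` is bounded below, hence has closed range
  have hπ₀bound : ∀ w₀ : W₀, ‖w₀‖ ≤ C * ‖π₀ w₀‖ := by
    intro w₀
    obtain ⟨g, hg1, hg2⟩ := exists_dual_vector'' 𝕜 w₀
    obtain ⟨v, hv, hvn⟩ := hC g
    have hvC : ‖v‖ ≤ C := by
      calc ‖v‖ ≤ C * ‖g‖ := hvn
        _ ≤ C * 1 := by gcongr
        _ = C := mul_one C
    calc ‖w₀‖ = ‖g w₀‖ := by
          rw [hg2]
          simp [RCLike.norm_ofReal, abs_of_nonneg (norm_nonneg w₀)]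
      _ = ‖v (π₀ w₀)‖ := by rw [← hv, hπ']
      _ ≤ ‖v‖ * ‖π₀ w₀‖ := v.le_opNorm _
      _ ≤ C * ‖π₀ w₀‖ := by gcongr
  have hanti : AntilipschitzWith (Real.toNNReal C) π₀ := by
    apply AntilipschitzWith.of_le_mul_dist
    intro x y
    simp only [dist_eq_norm, ← map_sub]
    calc ‖x - y‖ ≤ C * ‖π₀ (x - y)‖ := hπ₀bound _
      _ = (Real.toNNReal C : ℝ) * ‖π₀ (x - y)‖ := by
          rw [Real.coe_toNNReal C Cpos.le]
  have hclosed_rangeπ₀ : IsClosed (Set.range π₀) :=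
    hanti.isClosed_range π₀.uniformContinuous
  -- exactness in the middle
  have hmid : Set.range π₀ = {v : V₀ | ι₀ v = 0} := by
    apply Set.Subset.antisymm
    · rintro _ ⟨w, rfl⟩
      show ι₀ (π₀ w) = 0
      refine NormedSpace.eq_zero_of_forall_dual_eq_zero 𝕜 (fun u => ?_)
      have hz : π (ι u) = 0 := by
        have hm : ι u ∈ {v : StrongDual 𝕜 V₀ | π v = 0} := hexact ▸ Set.mem_range_self u
        exact hm
      calc u (ι₀ (π₀ w)) = ι u (π₀ w) := (hι' u (π₀ w)).symm
        _ = π (ι u) w := (hπ' (ι u) w).symm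
        _ = 0 := by rw [hz]; rfl
    · intro v₀ hv₀
      by_contra hnot
      have hcl : IsClosed ((LinearMap.range (π₀ : W₀ →ₗ[𝕜] V₀) : Submodule 𝕜 V₀) : Set V₀) := by
        simpa [LinearMap.coe_range] using hclosed_rangeπ₀
      haveI : IsClosed ((LinearMap.range (π₀ : W₀ →ₗ[𝕜] V₀) : Submodule 𝕜 V₀) : Set V₀) := hcl
      obtain ⟨f, _, hf0, hfx⟩ :=
        aux_exists_dual_annihilator (LinearMap.range (π₀ : W₀ →ₗ[𝕜] V₀)) hcl v₀
      have hfv₀ : f v₀ ≠ 0 := by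
        rw [hfx]
        intro h
        have h1 : ‖(Submodule.Quotient.mk v₀ : V₀ ⧸ LinearMap.range (π₀ : W₀ →ₗ[𝕜] V₀))‖ = 0 := by
          exact_mod_cast h
        have h2 : (Submodule.Quotient.mk v₀ : V₀ ⧸ LinearMap.range (π₀ : W₀ →ₗ[𝕜] V₀)) = 0 :=
          norm_eq_zero.mp h1
        have h3 : v₀ ∈ LinearMap.range (π₀ : W₀ →ₗ[𝕜] V₀) := (Submodule.Quotient.mk_eq_zero _).mp h2
        exact hnot (by simpa [LinearMap.mem_range] using h3)
      have hπf : π f = 0 := by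
        ext w₀
        show π f w₀ = 0
        rw [hπ' f w₀]
        exact hf0 _ (LinearMap.mem_range_self _ w₀)
      have hfr : f ∈ Set.range ι := by rw [hexact]; exact hπf
      obtain ⟨u, rfl⟩ := hfr
      exact hfv₀ (by rw [hι' u v₀, hv₀, map_zero])
  -- density of `range ι₀`
  have hdense : ∀ u₀ : U₀, u₀ ∈ (LinearMap.range (ι₀ : V₀ →ₗ[𝕜] U₀)).topologicalClosure := by
    intro u₀
    by_contra hnot
    obtain ⟨u, -, hu0, hux⟩ :=
      aux_exists_dual_annihilator (LinearMap.range (ι₀ : V₀ →ₗ[𝕜] U₀)).topologicalClosure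
        (Submodule.isClosed_topologicalClosure _) u₀
    have hιu : ι u = 0 := by
      ext v₀
      show ι u v₀ = 0
      rw [hι' u v₀]
      exact hu0 _ (Submodule.le_topologicalClosure _ (LinearMap.mem_range_self _ v₀))
    have hu : u = 0 := hι (by rw [hιu, map_zero])
    have : u u₀ ≠ 0 := by
      rw [hux]
      intro h
      have h1 : ‖(Submodule.Quotient.mk u₀ :
          U₀ ⧸ (LinearMap.range (ι₀ : V₀ →ₗ[𝕜] U₀)).topologicalClosure)‖ = 0 := by exact_mod_cast h
      haveI : IsClosed (((LinearMap.range (ι₀ : V₀ →ₗ[𝕜] U₀)).topologicalClosure : Submodule 𝕜 U₀) : Set U₀) :=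
        Submodule.isClosed_topologicalClosure _
      have h2 := norm_eq_zero.mp h1
      exact hnot ((Submodule.Quotient.mk_eq_zero _).mp h2)
    exact this (by rw [hu]; rfl)
  -- key distance estimate for `ι₀`
  set N : Submodule 𝕜 V₀ := LinearMap.ker (ι₀ : V₀ →ₗ[𝕜] U₀) with hNdef
  have hNclosed : IsClosed (N : Set V₀) := ContinuousLinearMap.isClosed_ker ι₀
  haveI : IsClosed (N : Set V₀) := hNclosed
  have hdist : ∀ v₀ : V₀, ‖(Submodule.Quotient.mk v₀ : V₀ ⧸ N)‖ ≤ c * ‖ι₀ v₀‖ := by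
    intro v₀
    obtain ⟨f, hf1, hf0, hfx⟩ := aux_exists_dual_annihilator N hNclosed v₀
    have hπf : π f = 0 := by
      ext w₀
      show π f w₀ = 0
      rw [hπ' f w₀]
      apply hf0
      have hmem : π₀ w₀ ∈ {v : V₀ | ι₀ v = 0} := hmid ▸ Set.mem_range_self w₀
      exact LinearMap.mem_ker.mpr hmem
    have hfr : f ∈ Set.range ι := by rw [hexact]; exact hπf
    obtain ⟨u, hu⟩ := hfr
    have h1 : ‖(Submodule.Quotient.mk v₀ : V₀ ⧸ N)‖ = ‖f v₀‖ := by
      rw [hfx]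
      simp [RCLike.norm_ofReal, abs_of_nonneg (norm_nonneg _)]
    have huc : ‖u‖ ≤ c := by
      calc ‖u‖ ≤ c * ‖ι u‖ := hc u
        _ = c * ‖f‖ := by rw [hu]
        _ ≤ c * 1 := by gcongr
        _ = c := mul_one c
    calc ‖(Submodule.Quotient.mk v₀ : V₀ ⧸ N)‖ = ‖f v₀‖ := h1
      _ = ‖u (ι₀ v₀)‖ := by rw [← hu, hι' u v₀]
      _ ≤ ‖u‖ * ‖ι₀ v₀‖ := u.le_opNorm _
      _ ≤ c * ‖ι₀ v₀‖ := by gcongr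
  -- surjectivity of `ι₀` by the controlled closure lemma
  have hι₀surj : Function.Surjective ι₀ := by
    set G : NormedAddGroupHom V₀ U₀ :=
      (AddMonoidHomClass.toAddMonoidHom ι₀).mkNormedAddGroupHom ‖ι₀‖
        (fun v => ι₀.le_opNorm v) with hGdef
    have hGcoe : ∀ v : V₀, G v = ι₀ v := fun v => rfl
    have hsow : G.SurjectiveOnWith (LinearMap.range (ι₀ : V₀ →ₗ[𝕜] U₀)).toAddSubgroup (c + 1) := by
      intro u₀ hu₀
      obtain ⟨v', hv'⟩ := hu₀
      by_cases h0 : u₀ = 0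
      · refine ⟨0, by simp [hGcoe, h0], by simp [h0]⟩
      · have hpos : 0 < ‖u₀‖ := norm_pos_iff.mpr h0
        obtain ⟨m, hm, hmlt⟩ :=
          Submodule.Quotient.norm_mk_lt (Submodule.Quotient.mk v' : V₀ ⧸ N) hpos
        have hmem : m - v' ∈ N := (Submodule.Quotient.eq N).mp hm
        have hιm : ι₀ m = u₀ := by
          have hz : ι₀ (m - v') = 0 := LinearMap.mem_ker.mp hmem
          rw [map_sub] at hz
          have : ι₀ m = ι₀ v' := by linear_combination (norm := abel_nf) hz
          rw [this]; exact hv'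
        refine ⟨m, by rw [hGcoe, hιm], ?_⟩
        calc ‖m‖ ≤ ‖(Submodule.Quotient.mk v' : V₀ ⧸ N)‖ + ‖u₀‖ := hmlt.le
          _ ≤ c * ‖ι₀ v'‖ + ‖u₀‖ := by gcongr; exact hdist v'
          _ = c * ‖u₀‖ + ‖u₀‖ := by rw [show ι₀ v' = u₀ from hv']
          _ = (c + 1) * ‖u₀‖ := by ring
    have hcc := controlled_closure_of_complete (f := G)
      (K := (LinearMap.range (ι₀ : V₀ →ₗ[𝕜] U₀)).toAddSubgroup) (by positivity : (0:ℝ) < c + 1)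
      one_pos hsow
    intro u₀
    have hmem : u₀ ∈ ((LinearMap.range (ι₀ : V₀ →ₗ[𝕜] U₀)).toAddSubgroup).topologicalClosure := by
      have h := hdense u₀
      exact h
    obtain ⟨v, hv, -⟩ := hcc u₀ hmem
    exact ⟨v, by rw [← hGcoe]; exact hv⟩
  exact ⟨hπ₀inj, hmid, hι₀surj⟩
end

section
/- Let U₀, V₀, W₀ be Banach spaces over 𝕜 = ℝ or ℂ and set U := (U₀)*, V := (V₀)*, W := (W₀)*; regard U₀ ⊆ U*, V₀ ⊆ V*, W₀ ⊆ W* via the canonical embeddings into the double duals. Suppose ι : U → V and π : V → W are continuous linear maps with ι injective, range ι = ker π, and π surjective, and suppose π*(W₀) ⊆ V₀ and ι*(V₀) ⊆ U₀. Let π₀ : W₀ → V₀ and ι₀ : V₀ → U₀ denote the restrictions of π* and ι*. Then the norm closure of the range of π₀ in V₀ equals ker ι₀. -/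
open NormedSpace

variable {𝕜 : Type*} [RCLike 𝕜]

/-- If `0 → U → V → W → 0` is an exact sequence of dual Banach spaces
(`U = (U₀)*`, `V = (V₀)*`, `W = (W₀)*`) whose dual maps preserve the preduals
(`π*(W₀) ⊆ V₀`, `ι*(V₀) ⊆ U₀`, where the preduals are regarded as subspaces of the duals
via the canonical embeddings into the double duals), then the norm closure of the
range of the restriction `π₀ : W₀ → V₀` of `π*` equals the kernel of the restriction
`ι₀ : V₀ → U₀` of `ι*`. -/
theorem predual_sequence_closure_range {U₀ V₀ W₀ : Type*}
    [NormedAddCommGroup U₀] [NormedSpace 𝕜 U₀] [CompleteSpace U₀]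
    [NormedAddCommGroup V₀] [NormedSpace 𝕜 V₀] [CompleteSpace V₀]
    [NormedAddCommGroup W₀] [NormedSpace 𝕜 W₀] [CompleteSpace W₀]
    (ι : StrongDual 𝕜 U₀ →L[𝕜] StrongDual 𝕜 V₀) (π : StrongDual 𝕜 V₀ →L[𝕜] StrongDual 𝕜 W₀)
    (hι : Function.Injective ι)
    (hexact : Set.range ι = {v : StrongDual 𝕜 V₀ | π v = 0})
    (hπ : Function.Surjective π)
    -- `π₀ : W₀ → V₀` is the restriction of `π*` to the preduals:
    (π₀ : W₀ →L[𝕜] V₀)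
    (hπ₀ : ∀ w : W₀,
      inclusionInDoubleDual 𝕜 V₀ (π₀ w) = dualMap π (inclusionInDoubleDual 𝕜 W₀ w))
    -- `ι₀ : V₀ → U₀` is the restriction of `ι*` to the preduals:
    (ι₀ : V₀ →L[𝕜] U₀)
    (hι₀ : ∀ v : V₀,
      inclusionInDoubleDual 𝕜 U₀ (ι₀ v) = dualMap ι (inclusionInDoubleDual 𝕜 V₀ v)) :
    closure (Set.range π₀) = {v : V₀ | ι₀ v = 0} := by
  apply Set.Subset.antisymm
  · -- closure (range π₀) ⊆ ker ι₀
    have hclosed : IsClosed {v : V₀ | ι₀ v = 0} := isClosed_eq ι₀.continuous continuous_const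
    refine closure_minimal ?_ hclosed
    rintro _ ⟨w, rfl⟩
    refine eq_zero_of_forall_dual_eq_zero 𝕜 fun f => ?_
    have hπι : π (ι f) = 0 := by
      have : ι f ∈ {v : StrongDual 𝕜 V₀ | π v = 0} := hexact ▸ Set.mem_range_self f
      exact this
    calc f (ι₀ (π₀ w)) = (inclusionInDoubleDual 𝕜 U₀ (ι₀ (π₀ w))) f := rfl
      _ = (dualMap ι (inclusionInDoubleDual 𝕜 V₀ (π₀ w))) f := by rw [hι₀]
      _ = (inclusionInDoubleDual 𝕜 V₀ (π₀ w)) (ι f) := rfl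
      _ = (dualMap π (inclusionInDoubleDual 𝕜 W₀ w)) (ι f) := by rw [hπ₀]
      _ = (π (ι f)) w := rfl
      _ = 0 := by rw [hπι]; rfl
  · -- ker ι₀ ⊆ closure (range π₀)
    intro v hv
    by_contra hvn
    set S : Submodule 𝕜 V₀ := (LinearMap.range (π₀ : W₀ →ₗ[𝕜] V₀)).topologicalClosure with hS
    have hSset : (S : Set V₀) = closure (Set.range π₀) := by
      rw [hS, Submodule.topologicalClosure_coe]
      rfl
    have hvS : v ∉ S := by
      rw [← SetLike.mem_coe, hSset]; exact hvn
    haveI : IsClosed (S : Set V₀) := Submodule.isClosed_topologicalClosure _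
    have hQv : (Submodule.Quotient.mk v : V₀ ⧸ S) ≠ 0 := by
      simpa [Submodule.Quotient.mk_eq_zero] using hvS
    obtain ⟨g, -, hg⟩ := exists_dual_vector 𝕜 (Submodule.Quotient.mk v : V₀ ⧸ S) (norm_ne_zero_iff.2 hQv)
    -- the quotient map as a continuous linear map
    let Q : V₀ →L[𝕜] V₀ ⧸ S :=
      LinearMap.mkContinuous S.mkQ 1
        (fun x => by simpa using Submodule.Quotient.norm_mk_le S x)
    have hQ : ∀ x : V₀, Q x = Submodule.Quotient.mk x := fun x => rfl
    let f : StrongDual 𝕜 V₀ := g.comp Q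
    -- f vanishes on the range of π₀
    have hf0 : ∀ w : W₀, f (π₀ w) = 0 := by
      intro w
      have hmem : π₀ w ∈ S := by
        rw [← SetLike.mem_coe, hSset]
        exact subset_closure (Set.mem_range_self w)
      have : (Submodule.Quotient.mk (π₀ w) : V₀ ⧸ S) = 0 :=
        (Submodule.Quotient.mk_eq_zero S).2 hmem
      show g (Q (π₀ w)) = 0
      rw [hQ, this, map_zero]
    -- f does not vanish at v
    have hfv : f v ≠ 0 := by
      show g (Q v) ≠ 0
      rw [hQ, hg]
      have : ‖(Submodule.Quotient.mk v : V₀ ⧸ S)‖ ≠ 0 := norm_ne_zero_iff.2 hQv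
      exact_mod_cast fun h => this (by exact_mod_cast RCLike.ofReal_eq_zero.1 h)
    -- π f = 0
    have hπf : π f = 0 := by
      ext w
      have h2 : inclusionInDoubleDual 𝕜 V₀ (π₀ w) f = dualMap π (inclusionInDoubleDual 𝕜 W₀ w) f :=
        congrFun (congrArg _ (hπ₀ w)) f
      have h3 : inclusionInDoubleDual 𝕜 V₀ (π₀ w) f = f (π₀ w) := rfl
      have h4 : dualMap π (inclusionInDoubleDual 𝕜 W₀ w) f = π f w := rfl
      rw [ContinuousLinearMap.zero_apply, ← h4, ← h2, h3, hf0]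
    -- hence f ∈ range ι
    have hfr : f ∈ Set.range ι := by
      rw [hexact]; exact hπf
    obtain ⟨u, hu⟩ := hfr
    -- but then f v = 0, contradiction
    have : f v = 0 := by
      have h5 : inclusionInDoubleDual 𝕜 U₀ (ι₀ v) u = dualMap ι (inclusionInDoubleDual 𝕜 V₀ v) u :=
        congrFun (congrArg _ (hι₀ v)) u
      have h6 : inclusionInDoubleDual 𝕜 U₀ (ι₀ v) u = u (ι₀ v) := rfl
      have h7 : dualMap ι (inclusionInDoubleDual 𝕜 V₀ v) u = ι u v := rfl
      have hv0 : ι₀ v = 0 := hv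
      rw [← hu]
      rw [← h7, ← h5, h6, hv0, map_zero]
    exact hfv this
end

section
/- Let U₀, V₀, W₀ be Banach spaces over 𝕜 = ℝ or ℂ and set U := (U₀)*, V := (V₀)*, W := (W₀)*; regard U₀ ⊆ U*, V₀ ⊆ V*, W₀ ⊆ W* via the canonical embeddings into the double duals. Suppose ι : U → V and π : V → W are continuous linear maps with ι injective, range ι = ker π, and π surjective, and suppose π*(W₀) ⊆ V₀ and ι*(V₀) ⊆ U₀. Let ι₀ : V₀ → U₀ denote the restriction of ι*. Then the range of ι₀ is dense in U₀. -/
open NormedSpace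

variable {𝕜 : Type*} [RCLike 𝕜]

/-- If `0 → U → V → W → 0` is an exact sequence of dual Banach spaces
(`U = (U₀)*`, `V = (V₀)*`, `W = (W₀)*`) whose dual maps preserve the preduals
(`π*(W₀) ⊆ V₀`, `ι*(V₀) ⊆ U₀`, where the preduals are regarded as subspaces of the duals
via the canonical embeddings into the double duals), then the range of the
restriction `ι₀ : V₀ → U₀` of `ι*` is dense in `U₀`. -/
theorem predual_sequence_dense_range {U₀ V₀ W₀ : Type*}
    [NormedAddCommGroup U₀] [NormedSpace 𝕜 U₀] [CompleteSpace U₀]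
    [NormedAddCommGroup V₀] [NormedSpace 𝕜 V₀] [CompleteSpace V₀]
    [NormedAddCommGroup W₀] [NormedSpace 𝕜 W₀] [CompleteSpace W₀]
    (ι : StrongDual 𝕜 U₀ →L[𝕜] StrongDual 𝕜 V₀) (π : StrongDual 𝕜 V₀ →L[𝕜] StrongDual 𝕜 W₀)
    (hι : Function.Injective ι)
    (hexact : Set.range ι = {v : StrongDual 𝕜 V₀ | π v = 0})
    (hπ : Function.Surjective π)
    -- `π₀ : W₀ → V₀` is the restriction of `π*` to the preduals:
    (π₀ : W₀ →L[𝕜] V₀)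
    (hπ₀ : ∀ w : W₀,
      inclusionInDoubleDual 𝕜 V₀ (π₀ w) = dualMap π (inclusionInDoubleDual 𝕜 W₀ w))
    -- `ι₀ : V₀ → U₀` is the restriction of `ι*` to the preduals:
    (ι₀ : V₀ →L[𝕜] U₀)
    (hι₀ : ∀ v : V₀,
      inclusionInDoubleDual 𝕜 U₀ (ι₀ v) = dualMap ι (inclusionInDoubleDual 𝕜 V₀ v)) :
    DenseRange ι₀ := by
  -- Key: any continuous functional vanishing on the range of `ι₀` is zero.
  have key : ∀ u : StrongDual 𝕜 U₀, (∀ v : V₀, u (ι₀ v) = 0) → u = 0 := by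
    intro u hu
    have hιu : ι u = 0 := by
      ext v
      have h := congrArg (fun f : StrongDual 𝕜 (StrongDual 𝕜 U₀) => f u) (hι₀ v)
      simp only [dualMap, ContinuousLinearMap.flip_apply,
        ContinuousLinearMap.compL_apply, ContinuousLinearMap.coe_comp',
        Function.comp_apply, NormedSpace.dual_def] at h
      simp only [ContinuousLinearMap.zero_apply]
      rw [← h]
      exact hu v
    have := hι (hιu.trans (map_zero ι).symm)
    exact this
  -- Now prove density via Hahn-Banach on the quotient by the closure of the range.
  by_contra hdense
  set S : Submodule 𝕜 U₀ := (LinearMap.range (ι₀ : V₀ →ₗ[𝕜] U₀)).topologicalClosure with hS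
  have hSclosed : IsClosed (S : Set U₀) := Submodule.isClosed_topologicalClosure _
  have hSne : S ≠ ⊤ := by
    intro htop
    apply hdense
    have hcl : closure (Set.range ι₀) = (S : Set U₀) := by
      simp [hS, Submodule.topologicalClosure_coe, LinearMap.coe_range,
        ContinuousLinearMap.coe_coe]
    rw [DenseRange, dense_iff_closure_eq, hcl, htop]
    rfl
  obtain ⟨x, hx⟩ : ∃ x : U₀, x ∉ S := by
    by_contra h
    push_neg at h
    exact hSne (Submodule.eq_top_iff'.mpr h)
  -- Quotient by the closed submodule S
  haveI : IsClosed (S : Set U₀) := hSclosed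
  have hxq : Submodule.Quotient.mk (p := S) x ≠ 0 := by
    simpa [Submodule.Quotient.mk_eq_zero] using hx
  obtain ⟨g, -, hg⟩ := exists_dual_vector 𝕜 (Submodule.Quotient.mk (p := S) x) (norm_ne_zero_iff.mpr hxq)
  -- Pull back g to a functional on U₀
  let mkQc : U₀ →L[𝕜] U₀ ⧸ S :=
    { S.mkQ with cont := continuous_quot_mk }
  let u : StrongDual 𝕜 U₀ := g.comp mkQc
  have hu : ∀ v : V₀, u (ι₀ v) = 0 := by
    intro v
    have hmem : ι₀ v ∈ S := Submodule.le_topologicalClosure _ ⟨v, rfl⟩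
    have : Submodule.Quotient.mk (p := S) (ι₀ v) = 0 :=
      (Submodule.Quotient.mk_eq_zero S).mpr hmem
    simp only [u, ContinuousLinearMap.comp_apply]
    change g (Submodule.Quotient.mk (ι₀ v)) = 0
    rw [this, map_zero]
  have hu0 : u = 0 := key u hu
  have : g (Submodule.Quotient.mk (p := S) x) = 0 := by
    have := congrArg (fun f : StrongDual 𝕜 U₀ => f x) hu0
    exact (by simpa [u, mkQc] using this : g (mkQc x) = 0)
  rw [hg] at this
  have : ‖Submodule.Quotient.mk (p := S) x‖ = 0 := by exact_mod_cast this
  exact hxq (norm_eq_zero.mp this)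
end

section
/- Let 𝔞 and 𝔠 be Banach spaces over 𝕜 = ℝ or ℂ whose duals 𝔥 := 𝔞* and 𝔫 := 𝔠* are Banach Lie algebras satisfying ad*_η(𝔞) ⊆ 𝔞 for all η ∈ 𝔥 and ad*_ζ(𝔠) ⊆ 𝔠 for all ζ ∈ 𝔫 (where 𝔞 and 𝔠 are regarded as subspaces of 𝔥* and 𝔫* via the canonical embeddings into the double duals). Let ω : 𝔥 × 𝔥 → 𝔫 be a continuous bilinear skew-symmetric map and φ : 𝔥 → aut(𝔫) a continuous linear map into the continuous derivations of 𝔫 satisfying the two conditions: ω([η, η'], η'') + ω([η', η''], η) + ω([η'', η], η') − φ(η)(ω(η', η'')) − φ(η')(ω(η'', η)) − φ(η'')(ω(η, η')) = 0 and ad_{ω(η,η')} + φ([η, η']) − (φ(η)∘φ(η') − φ(η')∘φ(η)) = 0 for all η, η', η'' ∈ 𝔥, so that 𝔤 := 𝔫 ⊕ 𝔥 is a Banach Lie algebra with bracket [(ζ, η), (ζ', η')] = ([ζ, ζ'] + φ(η)(ζ') − φ(η')(ζ) + ω(η, η'), [η, η']). Then the coadjoint maps ad*_{(ζ,η)} of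 𝔤 map the subspace 𝔠 ⊕ 𝔞 of 𝔤* = 𝔫* ⊕ 𝔥* into itself for all ζ ∈ 𝔫 and η ∈ 𝔥 if and only if the following three conditions hold for all η ∈ 𝔥 and ζ ∈ 𝔫: (1) φ(η)*(𝔠) ⊆ 𝔠, (2) (φ(·)ζ)*(𝔠) ⊆ 𝔞, and (3) (ω(η, ·))*(𝔠) ⊆ 𝔞. -/
open NormedSpace

variable {𝕜 : Type*} [RCLike 𝕜]

set_option maxHeartbeats 1000000 in
/-- Let `𝔞`, `𝔠` be Banach spaces whose duals `𝔥 := 𝔞*`, `𝔫 := 𝔠*` are Banach Lie algebras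
(with continuous bilinear Lie brackets `bh`, `bn`) satisfying `ad*_η(𝔞) ⊆ 𝔞` and
`ad*_ζ(𝔠) ⊆ 𝔠` (where `𝔞 ⊆ 𝔥*`, `𝔠 ⊆ 𝔫*` via the canonical embeddings into the double
duals).  Let `ω : 𝔥 × 𝔥 → 𝔫` be a continuous bilinear skew-symmetric map and
`φ : 𝔥 → aut(𝔫)` a continuous linear map into the derivations of `𝔫` satisfying the
cocycle and representation conditions, so that `𝔤 := 𝔫 ⊕ 𝔥` is a Banach Lie algebra with
bracket `[(ζ, η), (ζ', η')] = ([ζ, ζ'] + φ(η)(ζ') − φ(η')(ζ) + ω(η, η'), [η, η'])`.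
Then the coadjoint maps `ad*_{(ζ,η)}` of `𝔤` map the subspace `𝔠 ⊕ 𝔞` of
`𝔤* = 𝔫* ⊕ 𝔥*` into itself for all `ζ`, `η` if and only if for all `η ∈ 𝔥`, `ζ ∈ 𝔫`:
(1) `φ(η)*(𝔠) ⊆ 𝔠`, (2) `(φ(·)ζ)*(𝔠) ⊆ 𝔞`, (3) `(ω(η, ·))*(𝔠) ⊆ 𝔞`. -/
theorem coadjoint_invariance_iff {𝔞 𝔠 : Type*}
    [NormedAddCommGroup 𝔞] [NormedSpace 𝕜 𝔞] [CompleteSpace 𝔞]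
    [NormedAddCommGroup 𝔠] [NormedSpace 𝕜 𝔠] [CompleteSpace 𝔠]
    -- the Banach Lie algebra bracket on `𝔥 := 𝔞*`:
    (bh : StrongDual 𝕜 𝔞 →L[𝕜] StrongDual 𝕜 𝔞 →L[𝕜] StrongDual 𝕜 𝔞)
    (bh_alt : ∀ η, bh η η = 0)
    (bh_jacobi : ∀ η η' η'', bh (bh η η') η'' + bh (bh η' η'') η + bh (bh η'' η) η' = 0)
    -- the Banach Lie algebra bracket on `𝔫 := 𝔠*`:
    (bn : StrongDual 𝕜 𝔠 →L[𝕜] StrongDual 𝕜 𝔠 →L[𝕜] StrongDual 𝕜 𝔠)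
    (bn_alt : ∀ ζ, bn ζ ζ = 0)
    (bn_jacobi : ∀ ζ ζ' ζ'', bn (bn ζ ζ') ζ'' + bn (bn ζ' ζ'') ζ + bn (bn ζ'' ζ) ζ' = 0)
    -- `ad*_η(𝔞) ⊆ 𝔞` for all `η ∈ 𝔥`:
    (ha : ∀ (η : StrongDual 𝕜 𝔞) (a : 𝔞), ∃ a' : 𝔞, ∀ x : StrongDual 𝕜 𝔞,
      inclusionInDoubleDual 𝕜 𝔞 a (bh η x) = inclusionInDoubleDual 𝕜 𝔞 a' x)
    -- `ad*_ζ(𝔠) ⊆ 𝔠` for all `ζ ∈ 𝔫`: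
    (hc : ∀ (ζ : StrongDual 𝕜 𝔠) (c : 𝔠), ∃ c' : 𝔠, ∀ x : StrongDual 𝕜 𝔠,
      inclusionInDoubleDual 𝕜 𝔠 c (bn ζ x) = inclusionInDoubleDual 𝕜 𝔠 c' x)
    (ω : StrongDual 𝕜 𝔞 →L[𝕜] StrongDual 𝕜 𝔞 →L[𝕜] StrongDual 𝕜 𝔠)
    (ω_skew : ∀ η η', ω η η' = -ω η' η)
    (φ : StrongDual 𝕜 𝔞 →L[𝕜] StrongDual 𝕜 𝔠 →L[𝕜] StrongDual 𝕜 𝔠)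
    (φ_der : ∀ η ζ ζ', φ η (bn ζ ζ') = bn (φ η ζ) ζ' + bn ζ (φ η ζ'))
    -- the cocycle condition on `ω`:
    (hcocycle : ∀ η η' η'',
      ω (bh η η') η'' + ω (bh η' η'') η + ω (bh η'' η) η'
        - φ η (ω η' η'') - φ η' (ω η'' η) - φ η'' (ω η η') = 0)
    -- the representation-type condition:
    (hrep : ∀ η η' ζ, bn (ω η η') ζ + φ (bh η η') ζ - (φ η (φ η' ζ) - φ η' (φ η ζ)) = 0) :
    -- the coadjoint maps of `𝔤 = 𝔫 ⊕ 𝔥` preserve `𝔠 ⊕ 𝔞 ⊆ 𝔫* ⊕ 𝔥* = 𝔤*` ...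
    (∀ (ζ : StrongDual 𝕜 𝔠) (η : StrongDual 𝕜 𝔞) (c : 𝔠) (a : 𝔞), ∃ (c' : 𝔠) (a' : 𝔞),
        ∀ (ζ' : StrongDual 𝕜 𝔠) (η' : StrongDual 𝕜 𝔞),
          inclusionInDoubleDual 𝕜 𝔠 c (bn ζ ζ' + φ η ζ' - φ η' ζ + ω η η') +
              inclusionInDoubleDual 𝕜 𝔞 a (bh η η') =
            inclusionInDoubleDual 𝕜 𝔠 c' ζ' + inclusionInDoubleDual 𝕜 𝔞 a' η') ↔
      -- ... if and only if (1) `φ(η)*(𝔠) ⊆ 𝔠`: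
      ((∀ (η : StrongDual 𝕜 𝔞) (c : 𝔠), ∃ c' : 𝔠, ∀ ζ' : StrongDual 𝕜 𝔠,
          inclusionInDoubleDual 𝕜 𝔠 c (φ η ζ') = inclusionInDoubleDual 𝕜 𝔠 c' ζ') ∧
        -- (2) `(φ(·)ζ)*(𝔠) ⊆ 𝔞`:
        (∀ (ζ : StrongDual 𝕜 𝔠) (c : 𝔠), ∃ a' : 𝔞, ∀ η' : StrongDual 𝕜 𝔞,
          inclusionInDoubleDual 𝕜 𝔠 c (φ η' ζ) = inclusionInDoubleDual 𝕜 𝔞 a' η') ∧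
        -- (3) `(ω(η, ·))*(𝔠) ⊆ 𝔞`:
        (∀ (η : StrongDual 𝕜 𝔞) (c : 𝔠), ∃ a' : 𝔞, ∀ η' : StrongDual 𝕜 𝔞,
          inclusionInDoubleDual 𝕜 𝔠 c (ω η η') = inclusionInDoubleDual 𝕜 𝔞 a' η')) := by
  constructor
  · intro H
    refine ⟨?_, ?_, ?_⟩
    · intro η c
      obtain ⟨c', a', h⟩ := H 0 η c 0
      refine ⟨c', fun ζ' => ?_⟩
      have := h ζ' 0
      simpa using this
    · intro ζ c
      obtain ⟨c', a', h⟩ := H ζ 0 c 0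
      refine ⟨-a', fun η' => ?_⟩
      have := h 0 η'
      simp only [map_zero, ContinuousLinearMap.zero_apply, zero_add, add_zero, zero_sub,
        map_neg, ContinuousLinearMap.neg_apply] at this
      rw [map_neg, ContinuousLinearMap.neg_apply]
      linear_combination -this
    · intro η c
      obtain ⟨c', a', h⟩ := H 0 η c 0
      refine ⟨a', fun η' => ?_⟩
      have := h 0 η'
      simpa using this
  · rintro ⟨h1, h2, h3⟩ ζ η c a
    obtain ⟨c₁, hc₁⟩ := hc ζ c
    obtain ⟨c₂, hc₂⟩ := h1 η c
    obtain ⟨a₂, ha₂⟩ := h2 ζ c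
    obtain ⟨a₃, ha₃⟩ := h3 η c
    obtain ⟨a₁, ha₁⟩ := ha η a
    refine ⟨c₁ + c₂, -a₂ + a₃ + a₁, fun ζ' η' => ?_⟩
    have e1 := hc₁ ζ'
    have e2 := hc₂ ζ'
    have e3 := ha₂ η'
    have e4 := ha₃ η'
    have e5 := ha₁ η'
    simp only [map_add, map_sub, map_neg, ContinuousLinearMap.add_apply,
      ContinuousLinearMap.neg_apply] at *
    linear_combination e1 + e2 - e3 + e4 + e5
end

section
/- Let A be an associative (not necessarily commutative) ring, let p ∈ A be an idempotent (p² = p), and set q := 1 − p. For X, X' ∈ A define ω(X, X') := pXqX'p − pX'qXp. Then for all X, X' ∈ A and all σ ∈ A with pσp = σ, the identity −[ω(X, X'), σ] + [p[X, X']p, σ] − [pXp, [pX'p, σ]] + [pX'p, [pXp, σ]] = 0 holds, where [a, b] := ab − ba denotes the ring commutator. -/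
/-- Let `A` be an associative unital ring, `p` an idempotent, `q := 1 - p`, and
`ω(X, X') := pXqX'p − pX'qXp`.  Then for all `X, X' ∈ A` and all `σ ∈ A` with `pσp = σ`,
`−[ω(X, X'), σ] + [p[X, X']p, σ] − [pXp, [pX'p, σ]] + [pX'p, [pXp, σ]] = 0`,
where `[a, b] = ab − ba`. -/
theorem restricted_representation_condition {A : Type*} [Ring A]
    (p : A) (hp : p * p = p) (X X' σ : A) (hσ : p * σ * p = σ) :
    -⁅p * X * (1 - p) * X' * p - p * X' * (1 - p) * X * p, σ⁆
        + ⁅p * ⁅X, X'⁆ * p, σ⁆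
        - ⁅p * X * p, ⁅p * X' * p, σ⁆⁆
        + ⁅p * X' * p, ⁅p * X * p, σ⁆⁆ = 0 := by
  have h2 : ∀ x : A, p * (p * x) = p * x := fun x => by rw [← mul_assoc, hp]
  rw [← hσ]
  simp only [Ring.lie_def, mul_sub, sub_mul, mul_one, one_mul, mul_add, add_mul, mul_assoc, hp, h2]
  abel
end

section
/- Let A be an associative (not necessarily commutative) ring, let p ∈ A be an idempotent (p² = p), and set q := 1 − p. For X, X' ∈ A define ω(X, X') := pXqX'p − pX'qXp. Then for all X, X', X'' ∈ A the identity ω([X, X'], X'') + ω([X', X''], X) + ω([X'', X], X') − [pXp, ω(X', X'')] − [pX'p, ω(X'', X)] − [pX''p, ω(X, X')] = 0 holds, where [a, b] := ab − ba denotes the ring commutator. -/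
/-- Let `A` be an associative unital ring, `p` an idempotent, `q := 1 - p`, and
`ω(X, X') := pXqX'p − pX'qXp`.  Then for all `X, X', X'' ∈ A`,
`ω([X, X'], X'') + ω([X', X''], X) + ω([X'', X], X')
  − [pXp, ω(X', X'')] − [pX'p, ω(X'', X)] − [pX''p, ω(X, X')] = 0`,
where `[a, b] = ab − ba`. -/
theorem restricted_cocycle_condition {A : Type*} [Ring A]
    (p : A) (hp : p * p = p) (X X' X'' : A) :
    (p * ⁅X, X'⁆ * (1 - p) * X'' * p - p * X'' * (1 - p) * ⁅X, X'⁆ * p)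
        + (p * ⁅X', X''⁆ * (1 - p) * X * p - p * X * (1 - p) * ⁅X', X''⁆ * p)
        + (p * ⁅X'', X⁆ * (1 - p) * X' * p - p * X' * (1 - p) * ⁅X'', X⁆ * p)
        - ⁅p * X * p, p * X' * (1 - p) * X'' * p - p * X'' * (1 - p) * X' * p⁆
        - ⁅p * X' * p, p * X'' * (1 - p) * X * p - p * X * (1 - p) * X'' * p⁆
        - ⁅p * X'' * p, p * X * (1 - p) * X' * p - p * X' * (1 - p) * X * p⁆ = 0 := by
  have hp' : ∀ x : A, p * (p * x) = p * x := fun x => by rw [← mul_assoc, hp]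
  simp only [Ring.lie_def, mul_sub, sub_mul, mul_one, one_mul, mul_assoc, hp, hp']
  abel
end

section
/- Let A be an associative (not necessarily commutative) ring, let p ∈ A be an idempotent (p² = p), and set q := 1 − p. On the set of pairs (ρ, X) with ρ ∈ pAp and X ∈ A, define the bracket [(ρ, X), (ρ', X')] := (−(ρρ' − ρ'ρ) + [pXp, ρ'] − [pX'p, ρ] + pXqX'p − pX'qXp, [X, X']), where [a, b] = ab − ba. Then this bracket is bilinear, alternating, and satisfies the Jacobi identity; that is, it makes pAp × A into a Lie ring (a Lie algebra over the center of A). -/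
/-- The corner `pAp = {a ∈ A | pap = a}` of a ring `A` determined by an idempotent `p`,
as an additive subgroup of `A`. -/
def corner {A : Type*} [Ring A] (p : A) : AddSubgroup A where
  carrier := {a : A | p * a * p = a}
  add_mem' := by
    intro a b ha hb
    simp only [Set.mem_setOf_eq] at *
    rw [mul_add, add_mul, ha, hb]
  zero_mem' := by simp
  neg_mem' := by
    intro a ha
    simp only [Set.mem_setOf_eq] at *
    rw [mul_neg, neg_mul, ha]

def brF {A : Type*} [Ring A] (p : A) (a X b Y : A) : A :=
  -(a*b - b*a) + (p*X*p*b - b*(p*X*p)) - (p*Y*p*a - a*(p*Y*p))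
    + p*X*(1-p)*Y*p - p*Y*(1-p)*X*p

/-- Let `A` be an associative unital ring, `p` an idempotent, `q := 1 - p`.  On pairs
`(ρ, X)` with `ρ ∈ pAp` and `X ∈ A`, the bracket
`[(ρ, X), (ρ', X')] := (−(ρρ' − ρ'ρ) + [pXp, ρ'] − [pX'p, ρ] + pXqX'p − pX'qXp, [X, X'])`
is well defined (its first component again lies in `pAp`), biadditive, alternating, and
satisfies the Jacobi identity; that is, it makes `pAp × A` into a Lie ring. -/
theorem corner_extension_lieRing {A : Type*} [Ring A] (p : A) (hp : p * p = p) :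
    ∃ br : ↥(corner p) × A → ↥(corner p) × A → ↥(corner p) × A,
      (∀ x y : ↥(corner p) × A,
          (((br x y).1 : A) =
              -((x.1 : A) * (y.1 : A) - (y.1 : A) * (x.1 : A))
                + ⁅p * x.2 * p, (y.1 : A)⁆ - ⁅p * y.2 * p, (x.1 : A)⁆
                + p * x.2 * (1 - p) * y.2 * p - p * y.2 * (1 - p) * x.2 * p) ∧
            (br x y).2 = ⁅x.2, y.2⁆) ∧
      (∀ x y z : ↥(corner p) × A, br (x + y) z = br x z + br y z) ∧
      (∀ x y z : ↥(corner p) × A, br x (y + z) = br x y + br x z) ∧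
      (∀ x : ↥(corner p) × A, br x x = 0) ∧
      (∀ x y z : ↥(corner p) × A,
        br (br x y) z + br (br y z) x + br (br z x) y = 0) := by
  have hpp : ∀ x : A, p * (p * x) = p * x := fun x => by rw [← mul_assoc, hp]
  have mem : ∀ (a : ↥(corner p)) (X : A) (b : ↥(corner p)) (Y : A),
      brF p (a : A) X (b : A) Y ∈ corner p := by
    intro a X b Y
    have ha : p * (a : A) * p = (a : A) := a.2
    have hb : p * (b : A) * p = (b : A) := b.2
    show p * brF p (a : A) X (b : A) Y * p = brF p (a : A) X (b : A) Y
    rw [← ha, ← hb]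
    simp only [brF, mul_add, add_mul, mul_sub, sub_mul, mul_one, one_mul, mul_assoc, hp, hpp,
      mul_neg, neg_mul, sub_eq_add_neg, neg_add, neg_neg]
  refine ⟨fun x y => (⟨brF p (x.1 : A) x.2 (y.1 : A) y.2, mem x.1 x.2 y.1 y.2⟩, ⁅x.2, y.2⁆),
    ?_, ?_, ?_, ?_, ?_⟩
  · intro x y
    constructor
    · simp only [brF, Ring.lie_def]
    · rfl
  · intro x y z
    refine Prod.ext (Subtype.ext ?_) ?_
    · push_cast [Prod.fst_add, Prod.snd_add]
      simp only [brF]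
      noncomm_ring
    · simp only [Prod.snd_add, Ring.lie_def]; noncomm_ring
  · intro x y z
    refine Prod.ext (Subtype.ext ?_) ?_
    · push_cast [Prod.fst_add, Prod.snd_add]
      simp only [brF]
      noncomm_ring
    · simp only [Prod.snd_add, Ring.lie_def]; noncomm_ring
  · intro x
    refine Prod.ext (Subtype.ext ?_) ?_
    · show brF p (x.1 : A) x.2 (x.1 : A) x.2 = ((0 : ↥(corner p)) : A)
      simp only [brF, ZeroMemClass.coe_zero]
      noncomm_ring
    · simp [Ring.lie_def]
  · intro x y z
    have ha : p * (x.1 : A) * p = (x.1 : A) := x.1.2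
    have hb : p * (y.1 : A) * p = (y.1 : A) := y.1.2
    have hc : p * (z.1 : A) * p = (z.1 : A) := z.1.2
    refine Prod.ext (Subtype.ext ?_) ?_
    · push_cast [Prod.fst_add, Prod.snd_add]
      show brF p (brF p (x.1 : A) x.2 (y.1 : A) y.2) ⁅x.2, y.2⁆ (z.1 : A) z.2
          + brF p (brF p (y.1 : A) y.2 (z.1 : A) z.2) ⁅y.2, z.2⁆ (x.1 : A) x.2
          + brF p (brF p (z.1 : A) z.2 (x.1 : A) x.2) ⁅z.2, x.2⁆ (y.1 : A) y.2
          = ((0 : ↥(corner p)) : A)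
      rw [← ha, ← hb, ← hc]
      simp only [brF, Ring.lie_def, ZeroMemClass.coe_zero, mul_add, add_mul, mul_sub, sub_mul,
        mul_one, one_mul, mul_assoc, hp, hpp, mul_neg, neg_mul, sub_eq_add_neg, neg_add, neg_neg]
      abel
    · show ⁅⁅x.2, y.2⁆, z.2⁆ + ⁅⁅y.2, z.2⁆, x.2⁆ + ⁅⁅z.2, x.2⁆, y.2⁆ = 0
      simp only [Ring.lie_def]
      noncomm_ring
end
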